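/- Let k be an algebraically closed field and let X_1, …, X_r be N×N matrices over k satisfying X_i² = 0 for all i and X_i X_j + X_j X_i = 0 for all i, j. Then there exists an invertible N×N matrix T over k such that T⁻¹ X_i T is upper triangular for every i ∈ {1, …, r}. -/

import Mathlib

open Matrix

section SimultaneousTriangularization

variable {k : Type*} [Field k] {r : ℕ}

private lemma mul_listProd_eq_zero {N : ℕ} (X : Fin r → Matrix (Fin N) (Fin N) k)
    (hsq : ∀ i, X i * X i = 0)
    (hanti : ∀ i j, X i * X j + X j * X i = 0) :
    ∀ (L : List (Fin r)) (j : Fin r), j ∈ L → X j * (L.map X).prod = 0 := by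
  intro L
  induction L with
  | nil => intro j hj; simp at hj
  | cons a L ih =>
    intro j hj
    rw [List.map_cons, List.prod_cons, ← mul_assoc]
    rcases List.mem_cons.mp hj with h | h
    · subst h; rw [hsq j, zero_mul]
    · have hco : X j * X a = -(X a * X j) :=
        eq_neg_of_add_eq_zero_left (hanti j a)
      rw [hco, neg_mul, mul_assoc, ih j h, mul_zero, neg_zero]

private lemma exists_kernel {N : ℕ} (hN : 0 < N) (X : Fin r → Matrix (Fin N) (Fin N) k)
    (hsq : ∀ i, X i * X i = 0) (hanti : ∀ i j, X i * X j + X j * X i = 0) :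
    ∃ v : Fin N → k, v ≠ 0 ∧ ∀ i, (X i).mulVec v = 0 := by
  classical
  set v0 : Fin N → k := fun _ => 1 with hv0
  have hv0ne : v0 ≠ 0 := by
    intro h
    have := congrFun h ⟨0, hN⟩
    simp [v0] at this
  set P : ℕ → Prop := fun m => ∃ L : List (Fin r), L.Nodup ∧ L.length = m ∧
      ((L.map X).prod).mulVec v0 ≠ 0 with hP
  have hP0 : P 0 := ⟨[], by simp, rfl, by simpa using hv0ne⟩
  have hbd : ∀ m, P m → m ≤ r := by
    rintro m ⟨L, hnd, hlen, -⟩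
    have := hnd.length_le_card
    simpa [hlen] using this
  have hPn : P (Nat.findGreatest P r) := Nat.findGreatest_spec (Nat.zero_le r) hP0
  have hmax : ¬ P (Nat.findGreatest P r + 1) := by
    intro hcon
    exact Nat.findGreatest_is_greatest (Nat.lt_succ_self _) (hbd _ hcon) hcon
  obtain ⟨L, hnd, hlen, hne⟩ := hPn
  refine ⟨((L.map X).prod).mulVec v0, hne, ?_⟩
  intro i
  by_cases hi : i ∈ L
  · rw [Matrix.mulVec_mulVec, mul_listProd_eq_zero X hsq hanti L i hi, Matrix.zero_mulVec]
  · by_contra hne'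
    refine hmax ⟨i :: L, List.nodup_cons.mpr ⟨hi, hnd⟩, by simp [hlen], ?_⟩
    rw [List.map_cons, List.prod_cons, ← Matrix.mulVec_mulVec]
    exact hne'


private lemma colmat_inv {n : ℕ} (w : Fin (n+1) → k) (hw0 : w 0 ≠ 0) :
    (Matrix.of (fun i j => if j = 0 then w i else (1 : Matrix (Fin (n+1)) (Fin (n+1)) k) i j)) *
    (Matrix.of (fun i j => if j = 0 then (if i = 0 then (w 0)⁻¹ else -(w i) * (w 0)⁻¹)
        else (1 : Matrix (Fin (n+1)) (Fin (n+1)) k) i j)) = 1 := by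
  ext i j
  rw [Matrix.mul_apply, Fin.sum_univ_succ]
  by_cases hj : j = 0
  · subst hj
    induction i using Fin.cases with
    | zero =>
        simp [Matrix.one_apply, (Fin.succ_ne_zero _).symm, Fin.succ_ne_zero,
          mul_inv_cancel₀ hw0]
    | succ i' =>
        simp [Matrix.one_apply, Fin.succ_ne_zero, (Fin.succ_ne_zero _).symm, Fin.succ_inj,
          Finset.sum_ite_eq, mul_ite, ite_mul]
  · induction i using Fin.cases with
    | zero =>
        simp [Matrix.one_apply, Ne.symm hj, hj, (Fin.succ_ne_zero _).symm, Fin.succ_ne_zero,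
          Finset.sum_ite_eq, mul_ite, ite_mul, eq_comm]
    | succ i' =>
        simp only [Matrix.of_apply, if_neg hj, Matrix.one_apply, Fin.succ_ne_zero, if_neg,
          (Fin.succ_ne_zero i').symm, ite_mul, one_mul, zero_mul, zero_add,
          if_neg (Ne.symm (Fin.succ_ne_zero i'))]
        rw [Finset.sum_eq_single i' (fun b _ hb => by simp [Ne.symm hb]) (by simp)]
        simp [Ne.symm hj]


private lemma colmat_inv' {n : ℕ} (w : Fin (n+1) → k) (hw0 : w 0 ≠ 0) :
    (Matrix.of (fun i j => if j = 0 then (if i = 0 then (w 0)⁻¹ else -(w i) * (w 0)⁻¹)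
        else (1 : Matrix (Fin (n+1)) (Fin (n+1)) k) i j)) *
    (Matrix.of (fun i j => if j = 0 then w i else (1 : Matrix (Fin (n+1)) (Fin (n+1)) k) i j)) = 1 := by
  ext i j
  rw [Matrix.mul_apply, Fin.sum_univ_succ]
  by_cases hj : j = 0
  · subst hj
    induction i using Fin.cases with
    | zero =>
        simp [Matrix.one_apply, (Fin.succ_ne_zero _).symm, Fin.succ_ne_zero,
          inv_mul_cancel₀ hw0]
    | succ i' =>
        simp [Matrix.one_apply, Fin.succ_ne_zero, (Fin.succ_ne_zero _).symm, Fin.succ_inj,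
          Finset.sum_ite_eq, mul_ite, ite_mul]
        field_simp
        ring
  · induction i using Fin.cases with
    | zero =>
        simp [Matrix.one_apply, Ne.symm hj, hj, (Fin.succ_ne_zero _).symm, Fin.succ_ne_zero,
          Finset.sum_ite_eq, mul_ite, ite_mul, eq_comm]
    | succ i' =>
        simp only [Matrix.of_apply, if_neg hj, Matrix.one_apply, Fin.succ_ne_zero, if_neg,
          (Fin.succ_ne_zero i').symm, ite_mul, one_mul, zero_mul, zero_add,
          if_neg (Ne.symm (Fin.succ_ne_zero i'))]
        rw [Finset.sum_eq_single i' (fun b _ hb => by simp [Ne.symm hb]) (by simp)]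
        simp [Ne.symm hj]

private lemma triang_aux : ∀ (N : ℕ) (X : Fin r → Matrix (Fin N) (Fin N) k),
    (∀ i, X i * X i = 0) → (∀ i j, X i * X j + X j * X i = 0) →
    ∃ T : Matrix (Fin N) (Fin N) k, IsUnit T ∧
      ∀ t i j, j < i → (T⁻¹ * X t * T) i j = 0 := by
  intro N
  induction N with
  | zero =>
    intro X _ _
    exact ⟨1, isUnit_one, fun t i => i.elim0⟩
  | succ n ih =>
    intro X hsq hanti
    classical
    obtain ⟨v, hv, hkv⟩ := exists_kernel (Nat.succ_pos n) X hsq hanti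
    obtain ⟨m, hm⟩ : ∃ m, v m ≠ 0 := by
      by_contra h; push_neg at h; exact hv (funext fun i => h i)
    set σ : Equiv.Perm (Fin (n+1)) := Equiv.swap 0 m with hσ
    set w : Fin (n+1) → k := fun i => v (σ i) with hwdef
    have hw0 : w 0 ≠ 0 := by simpa [w, σ, Equiv.swap_apply_left] using hm
    set C : Matrix (Fin (n+1)) (Fin (n+1)) k :=
      Matrix.of (fun i j => if j = 0 then w i else (1 : Matrix (Fin (n+1)) (Fin (n+1)) k) i j) with hCdef
    set C' : Matrix (Fin (n+1)) (Fin (n+1)) k :=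
      Matrix.of (fun i j => if j = 0 then (if i = 0 then (w 0)⁻¹ else -(w i) * (w 0)⁻¹)
        else (1 : Matrix (Fin (n+1)) (Fin (n+1)) k) i j) with hC'def
    have hCC' : C * C' = 1 := colmat_inv w hw0
    have hC'C : C' * C = 1 := colmat_inv' w hw0
    set S : Matrix (Fin (n+1)) (Fin (n+1)) k := C.submatrix σ (Equiv.refl _) with hSdef
    set S' : Matrix (Fin (n+1)) (Fin (n+1)) k := C'.submatrix (Equiv.refl _) σ with hS'def
    have hSS' : S * S' = 1 := by
      rw [hSdef, hS'def, Matrix.submatrix_mul_equiv, hCC', Matrix.submatrix_one_equiv]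
    have hS'S : S' * S = 1 := by
      rw [hSdef, hS'def, Matrix.submatrix_mul_equiv, hC'C]
      simp
    have hScol : ∀ l, S l 0 = v l := by
      intro l
      simp only [hSdef, Matrix.submatrix_apply, Equiv.refl_apply, hCdef, Matrix.of_apply,
        if_pos rfl, hwdef]
      rw [Equiv.swap_apply_self]
      simp
    set Y : Fin r → Matrix (Fin (n+1)) (Fin (n+1)) k := fun t => S' * X t * S with hYdef
    have hYmul : ∀ t s, Y t * Y s = S' * (X t * X s) * S := by
      intro t s
      simp only [hYdef, mul_assoc]
      rw [← mul_assoc S S' (X s * S), hSS', one_mul]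
    have hYcol : ∀ t i, Y t i 0 = 0 := by
      intro t i
      have h1 : (S' * X t).mulVec v = 0 := by
        rw [← Matrix.mulVec_mulVec, hkv t, Matrix.mulVec_zero]
      have h2 : Y t i 0 = ((S' * X t).mulVec v) i := by
        show ((S' * X t) * S) i 0 = _
        rw [Matrix.mul_apply, Matrix.mulVec]
        simp only [dotProduct]
        exact Finset.sum_congr rfl fun l _ => by rw [hScol l]
      rw [h2, h1]; rfl
    -- the reindexing equivalence
    set e : Fin 1 ⊕ Fin n ≃ Fin (n+1) := finSumFinEquiv.trans (finCongr (Nat.add_comm 1 n)) with hedef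
    have he_inl : ∀ c : Fin 1, e (Sum.inl c) = 0 := by
      intro c
      apply Fin.ext
      simp [hedef, Fin.ext_iff, Fin.val_eq_zero c]
    have he_inr : ∀ b : Fin n, (e (Sum.inr b) : ℕ) = b + 1 := by
      intro b
      simp [hedef, Nat.add_comm]
    set W : Fin r → Matrix (Fin 1 ⊕ Fin n) (Fin 1 ⊕ Fin n) k := fun t => (Y t).submatrix e e with hWdef
    have hW21 : ∀ t (a : Fin n) (c : Fin 1), W t (Sum.inr a) (Sum.inl c) = 0 := by
      intro t a c
      simp only [hWdef, Matrix.submatrix_apply]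
      rw [he_inl c]
      exact hYcol t _
    have hWmul : ∀ t s, W t * W s = ((Y t * Y s)).submatrix e e := by
      intro t s
      simp only [hWdef]
      rw [Matrix.submatrix_mul_equiv]
    set Z : Fin r → Matrix (Fin n) (Fin n) k := fun t => (W t).toBlocks₂₂ with hZdef
    have hZmul : ∀ t s (a b : Fin n), (Z t * Z s) a b = (W t * W s) (Sum.inr a) (Sum.inr b) := by
      intro t s a b
      have hz : (∑ c : Fin 1, W t (Sum.inr a) (Sum.inl c) * W s (Sum.inl c) (Sum.inr b)) = 0 :=
        Finset.sum_eq_zero (fun c _ => by rw [hW21 t a c, zero_mul])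
      rw [Matrix.mul_apply, Matrix.mul_apply, Fintype.sum_sum_type, hz, zero_add]
      simp only [hZdef, Matrix.toBlocks₂₂, Matrix.of_apply]
    have hZsq : ∀ t, Z t * Z t = 0 := by
      intro t
      ext a b
      rw [hZmul, hWmul, Matrix.submatrix_apply, hYmul, hsq t, mul_zero, zero_mul]
      simp
    have hZanti : ∀ t s, Z t * Z s + Z s * Z t = 0 := by
      intro t s
      ext a b
      simp only [Matrix.add_apply, Matrix.zero_apply]
      rw [hZmul, hZmul, hWmul, hWmul, Matrix.submatrix_apply, Matrix.submatrix_apply,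
        hYmul, hYmul]
      have : S' * (X t * X s) * S + S' * (X s * X t) * S = 0 := by
        rw [← add_mul, ← mul_add, hanti t s, mul_zero, zero_mul]
      have h2 := congrFun (congrFun this (e (Sum.inr a))) (e (Sum.inr b))
      simpa using h2
    obtain ⟨T', hT'unit, hT'⟩ := ih Z hZsq hZanti
    have hdet : IsUnit T'.det := (Matrix.isUnit_iff_isUnit_det T').mp hT'unit
    have hT'1 : T' * T'⁻¹ = 1 := Matrix.mul_nonsing_inv T' hdet
    have hT'2 : T'⁻¹ * T' = 1 := Matrix.nonsing_inv_mul T' hdet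
    set U : Matrix (Fin (n+1)) (Fin (n+1)) k :=
      (Matrix.fromBlocks 1 0 0 T').submatrix e.symm e.symm with hUdef
    set V : Matrix (Fin (n+1)) (Fin (n+1)) k :=
      (Matrix.fromBlocks 1 0 0 T'⁻¹).submatrix e.symm e.symm with hVdef
    have hUV : U * V = 1 := by
      rw [hUdef, hVdef, Matrix.submatrix_mul_equiv, Matrix.fromBlocks_multiply]
      simp [hT'1, Matrix.fromBlocks_one]
    have hVU : V * U = 1 := by
      rw [hUdef, hVdef, Matrix.submatrix_mul_equiv, Matrix.fromBlocks_multiply]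
      simp [hT'2, Matrix.fromBlocks_one]
    refine ⟨S * U, ?_, ?_⟩
    · exact ((Units.isUnit ⟨S, S', hSS', hS'S⟩).mul (Units.isUnit ⟨U, V, hUV, hVU⟩))
    · have hTinv : (S * U)⁻¹ = V * S' := by
        apply Matrix.inv_eq_right_inv
        calc S * U * (V * S') = S * (U * V) * S' := by simp only [mul_assoc]
          _ = 1 := by rw [hUV, mul_one, hSS']
      intro t i j hij
      rw [hTinv]
      have hform : V * S' * X t * (S * U) = V * Y t * U := by
        simp only [hYdef, mul_assoc]
      rw [hform]
      have hYsub : Y t = (W t).submatrix e.symm e.symm := by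
        simp only [hWdef, Matrix.submatrix_submatrix]
        ext a b
        simp
      rw [hYsub, hVdef, hUdef, Matrix.submatrix_mul_equiv, Matrix.submatrix_mul_equiv]
      have hW21z : (W t).toBlocks₂₁ = 0 := by
        ext a c
        exact hW21 t a c
      have hWblocks : W t = Matrix.fromBlocks ((W t).toBlocks₁₁) ((W t).toBlocks₁₂) 0 (Z t) := by
        rw [← hW21z, hZdef]
        exact (Matrix.fromBlocks_toBlocks (W t)).symm
      rw [Matrix.submatrix_apply, hWblocks, Matrix.fromBlocks_multiply, Matrix.fromBlocks_multiply]
      simp only [Matrix.mul_zero, Matrix.zero_mul, Matrix.mul_one, Matrix.one_mul,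
        add_zero, zero_add]
      rcases hi : e.symm i with c | a
      · exfalso
        have : i = e (Sum.inl c) := by rw [← hi, Equiv.apply_symm_apply]
        rw [this, he_inl c] at hij
        exact absurd hij (Fin.not_lt_zero j)
      · rcases hjj : e.symm j with c | b
        · simp
        · have hi' : i = e (Sum.inr a) := by rw [← hi, Equiv.apply_symm_apply]
          have hj' : j = e (Sum.inr b) := by rw [← hjj, Equiv.apply_symm_apply]
          have hba : b < a := by
            rw [Fin.lt_def]
            have := hij
            rw [hi', hj', Fin.lt_def, he_inr a, he_inr b] at this
            omega
          simpa using hT' t a b hba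


end SimultaneousTriangularization

/-- If `X_1, …, X_r` are `N × N` matrices over an algebraically
closed field `k` with `X_i² = 0` for all `i` and `X_i X_j + X_j X_i = 0` for
all `i, j`, then there is an invertible matrix `T` simultaneously conjugating
all the `X_i` to upper triangular matrices. -/
theorem simultaneous_triangularization_of_square_zero_anticommuting
    (k : Type*) [Field k] [IsAlgClosed k]
    (N r : ℕ) (hN : 0 < N) (hr : 0 < r)
    (X : Fin r → Matrix (Fin N) (Fin N) k)
    (hsq : ∀ i, X i * X i = 0)
    (hanti : ∀ i j, X i * X j + X j * X i = 0) :
    ∃ T : Matrix (Fin N) (Fin N) k, IsUnit T ∧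
      ∀ t : Fin r, ∀ i j : Fin N, j < i → (T⁻¹ * X t * T) i j = 0 :=
  triang_aux N X hsq hanti
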